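/- Let $N_p \ge 1$ and let $r_1,\dots,r_{N_p}$ be real numbers. Define the matrix $M \in \mathbb{R}^{N_p \times N_p}$ by: for each $k = 1,\dots,N_p-1$, row $k$ of $M$ has the entry $r_1$ in column $1$, the entry $-r_{k+1}$ in column $k+1$, and zeros elsewhere; and row $N_p$ of $M$ has every entry equal to $1$. Then $\det M = \sum_{k=1}^{N_p} \prod_{i \neq k} r_i$ (the $(N_p-1)$-st elementary symmetric polynomial of $r_1,\dots,r_{N_p}$). In particular, if $r_i > 0$ for all $i$, then $M$ is invertible. -/

import Mathlib

open Finset Matrix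

lemma erase_prod {m : ℕ} (k : Fin m) (f : Fin m → ℝ) :
    ∏ i ∈ univ.erase k, f i = ∏ i, if i = k then 1 else f i := by
  have h1 : ∏ i ∈ univ.erase k, f i = ∏ i ∈ univ.erase k, (if i = k then 1 else f i) :=
    Finset.prod_congr rfl fun i hi => by rw [if_neg (Finset.mem_erase.1 hi).1]
  rw [h1, ← Finset.mul_prod_erase univ _ (mem_univ k), if_pos rfl, one_mul]

lemma sum_pair {m : ℕ} (A B : Fin m) (h : A ≠ B) (f : Fin m → ℝ)
    (hf : ∀ i, i ≠ A → i ≠ B → f i = 0) : ∑ i, f i = f A + f B := by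
  rw [← Finset.add_sum_erase _ f (mem_univ A),
      ← Finset.add_sum_erase _ f (Finset.mem_erase.2 ⟨Ne.symm h, mem_univ B⟩)]
  rw [Finset.sum_eq_zero, add_zero]
  intro i hi
  simp only [Finset.mem_erase] at hi
  exact hf i hi.2.1 hi.1

-- determinant of the "first column + superdiagonal" matrix
lemma detC (n : ℕ) (a : ℝ) (b : Fin (n+1) → ℝ) :
    Matrix.det (Matrix.of fun i j : Fin (n+1) =>
      if (j : ℕ) = 0 then a else if (j : ℕ) = (i : ℕ) + 1 then b j else 0)
    = (-1)^n * a * ∏ j : Fin n, b j.succ := by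
  rw [Matrix.det_succ_row _ (Fin.last n)]
  rw [Finset.sum_eq_single 0]
  · have hsub : (Matrix.of fun i j : Fin (n+1) =>
        if (j : ℕ) = 0 then a else if (j : ℕ) = (i : ℕ) + 1 then b j else 0).submatrix
          (Fin.last n).succAbove (0 : Fin (n+1)).succAbove
        = Matrix.diagonal fun j : Fin n => b j.succ := by
      ext k j
      simp only [Matrix.submatrix_apply, Fin.succAbove_last, Fin.succAbove_zero, Matrix.of_apply,
        Fin.val_succ, Fin.coe_castSucc, Matrix.diagonal_apply]
      rw [if_neg (Nat.succ_ne_zero _)]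
      by_cases hkj : j = k
      · subst hkj; rw [if_pos rfl, if_pos rfl]
      · rw [if_neg (fun hc => hkj (Fin.ext (Nat.succ_injective hc))), if_neg (Ne.symm hkj)]
    rw [hsub, Matrix.det_diagonal]
    simp [Fin.val_last]
  · intro j _ hj
    have h1 : ¬ ((j : ℕ) = 0) := fun hc => hj (Fin.ext hc)
    have h2 : ¬ ((j : ℕ) = n + 1) := by have := j.isLt; omega
    simp [Matrix.of_apply, h1, h2, Fin.val_last, hj]
  · intro h; exact absurd (mem_univ _) h

def batM (n : ℕ) (r : Fin (n+1) → ℝ) : Matrix (Fin (n+1)) (Fin (n+1)) ℝ :=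
  Matrix.of fun k j =>
    if (k : ℕ) = n then 1
    else if (j : ℕ) = 0 then r 0
    else if (j : ℕ) = (k : ℕ) + 1 then -(r j) else 0

lemma detBat : ∀ (n : ℕ) (r : Fin (n+1) → ℝ),
    (batM n r).det = ∑ k : Fin (n+1), ∏ i ∈ univ.erase k, r i := by
  intro n
  induction n with
  | zero =>
    intro r
    rw [Matrix.det_fin_one]
    simp [batM]
  | succ n ih =>
    intro r
    rw [Matrix.det_succ_column (batM (n+1) r) (Fin.last (n+1))]
    rw [sum_pair ((Fin.last n).castSucc) (Fin.last (n+1))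
      (by simp [Fin.ext_iff, Fin.val_last])]
    rotate_left
    · intro i hiA hiB
      have h1 : ¬ ((i : ℕ) = n + 1) := fun hc => hiB (Fin.ext (by simp [hc, Fin.val_last]))
      have h3 : ¬ ((n : ℕ) = (i : ℕ)) := fun hc =>
        hiA (Fin.ext (by simp [Fin.coe_castSucc, Fin.val_last, ← hc]))
      have h3' : ¬ ((i : ℕ) = n) := fun hc => h3 hc.symm
      simp [batM, Matrix.of_apply, h1, h3, h3', Fin.val_last]
    have hlast_entry : batM (n+1) r (Fin.last (n+1)) (Fin.last (n+1)) = 1 := by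
      simp [batM, Fin.val_last]
    have hmid_entry : batM (n+1) r ((Fin.last n).castSucc) (Fin.last (n+1))
        = -(r (Fin.last (n+1))) := by
      simp [batM, Fin.val_last, Fin.coe_castSucc]
    -- the minor at (last, last) is the C-matrix
    have hsub1 : (batM (n+1) r).submatrix (Fin.last (n+1)).succAbove (Fin.last (n+1)).succAbove
        = Matrix.of (fun i j : Fin (n+1) =>
            if (j : ℕ) = 0 then r 0 else if (j : ℕ) = (i : ℕ) + 1 then -(r j.castSucc) else 0) := by
      ext k j
      have hk : ¬ ((k : ℕ) = n + 1) := by have := k.isLt; omega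
      simp only [Matrix.submatrix_apply, Fin.succAbove_last, batM, Matrix.of_apply,
        Fin.coe_castSucc]
      rw [if_neg hk]
    -- the minor at (castSucc last, last) is batM n (r ∘ castSucc)
    have hsub2 : (batM (n+1) r).submatrix ((Fin.last n).castSucc).succAbove
        (Fin.last (n+1)).succAbove = batM n (fun i => r i.castSucc) := by
      ext k j
      simp only [Matrix.submatrix_apply, Fin.succAbove_last]
      by_cases hk : (k : ℕ) = n
      · have hkl : k = Fin.last n := Fin.ext (by simp [Fin.val_last, hk])
        have hrow : ((Fin.last n).castSucc).succAbove k = Fin.last (n+1) := by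
          rw [hkl, Fin.succAbove_castSucc_self]
          rfl
        rw [hrow]
        simp [batM, Fin.val_last, hk]
      · have hlt : (k : ℕ) < n := lt_of_le_of_ne (Nat.lt_succ_iff.1 k.isLt) hk
        have hrow : ((Fin.last n).castSucc).succAbove k = k.castSucc := by
          apply Fin.succAbove_of_castSucc_lt
          simp only [Fin.lt_iff_val_lt_val, Fin.coe_castSucc, Fin.val_last]
          omega
        rw [hrow]
        have hk2 : ¬ ((k : ℕ) = n + 1) := by omega
        simp only [batM, Matrix.of_apply, Fin.coe_castSucc, Fin.castSucc_zero]
        rw [if_neg hk2, if_neg hk]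
    rw [hsub1, hsub2, hlast_entry, hmid_entry, detC, ih]
    simp only [Fin.coe_castSucc, Fin.val_last]
    have e1 : ((-1:ℝ))^(n + (n+1)) = -1 := Odd.neg_one_pow ⟨n, by ring⟩
    have e2 : ((-1:ℝ))^((n+1) + (n+1)) = 1 := Even.neg_one_pow ⟨n+1, rfl⟩
    have e3 : ∏ j : Fin n, -(r (j.succ.castSucc)) = (-1:ℝ)^n * ∏ j : Fin n, r j.succ.castSucc := by
      have : (fun j : Fin n => -(r j.succ.castSucc)) = fun j => (-1) * r j.succ.castSucc :=
        funext fun j => (neg_one_mul _).symm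
      rw [this, Finset.prod_mul_distrib, Finset.prod_const, Finset.card_univ, Fintype.card_fin]
    have e4 : ((-1:ℝ))^n * (-1)^n = 1 := by
      rw [← pow_add]; exact Even.neg_one_pow ⟨n, by ring⟩
    have h1 : ∏ i ∈ univ.erase (Fin.last (n+1)), r i = ∏ i : Fin (n+1), r i.castSucc := by
      rw [erase_prod, Fin.prod_univ_castSucc, if_pos rfl, mul_one]
      exact Finset.prod_congr rfl fun i _ => by rw [if_neg (Fin.castSucc_lt_last i).ne]
    have h2 : ∀ k : Fin (n+1), ∏ i ∈ univ.erase (k.castSucc), r i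
        = (∏ i ∈ univ.erase k, r i.castSucc) * r (Fin.last (n+1)) := by
      intro k
      rw [erase_prod, erase_prod, Fin.prod_univ_castSucc]
      congr 1
      · exact Finset.prod_congr rfl fun i _ => by
          by_cases hik : i = k
          · subst hik; rw [if_pos rfl, if_pos rfl]
          · rw [if_neg (fun hc => hik (Fin.castSucc_injective _ hc)), if_neg hik]
      · rw [if_neg (Fin.castSucc_lt_last k).ne']
    rw [Fin.sum_univ_castSucc (f := fun k => ∏ i ∈ univ.erase k, r i)]
    simp only [h2, h1]
    rw [e1, e2, e3, Fin.prod_univ_succ (f := fun i : Fin (n+1) => r i.castSucc)]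
    simp only [Fin.castSucc_zero]
    rw [← Finset.sum_mul]
    linear_combination (r 0 * ∏ j : Fin n, r j.succ.castSucc) * e4

/-- The algebraic-constraint block `A₂₂` of a parallel battery module: first
`Np - 1` rows encode Kirchhoff voltage equalities, last row Kirchhoff's current
law. Its determinant is the `(Np-1)`-st elementary symmetric polynomial of the
resistances, hence it is invertible for positive resistances. -/
theorem stmt0 (Np : ℕ) (hNp : 1 ≤ Np) (r : Fin Np → ℝ)
    (M : Matrix (Fin Np) (Fin Np) ℝ)
    (hM : ∀ k j : Fin Np,
      M k j =
        if (k : ℕ) = Np - 1 then 1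
        else if j = ⟨0, hNp⟩ then r ⟨0, hNp⟩
        else if (j : ℕ) = (k : ℕ) + 1 then -(r j) else 0) :
    (M.det = ∑ k : Fin Np, ∏ i ∈ Finset.univ.erase k, r i) ∧
      ((∀ i, 0 < r i) → IsUnit M) := by
  obtain ⟨n, rfl⟩ : ∃ n, Np = n + 1 := ⟨Np - 1, (Nat.succ_pred_eq_of_pos hNp).symm⟩
  have hMeq : M = batM n r := by
    ext k j
    rw [hM k j]
    simp only [batM, Matrix.of_apply, Nat.add_sub_cancel, Fin.mk_zero, Fin.ext_iff, Fin.val_zero]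
  have hdet : M.det = ∑ k : Fin (n+1), ∏ i ∈ Finset.univ.erase k, r i := by
    rw [hMeq, detBat]
  refine ⟨hdet, fun hr => ?_⟩
  have hpos : 0 < M.det := by
    rw [hdet]
    refine Finset.sum_pos (fun k _ => Finset.prod_pos fun i _ => hr i) ⟨0, mem_univ 0⟩
  exact (Matrix.isUnit_iff_isUnit_det M).2 (isUnit_iff_ne_zero.2 hpos.ne')
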